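/- arXiv:2004.08529 — 4 statements merged into one kernel-verified Lean document; each statement's English description precedes it below -/
import Mathlib

section
/- For 0 < s < 1, 1 ≤ p < ∞, and f : ℝ^n → ℝ measurable, the caloric Besov seminorm satisfies the identity 𝒩^Δ_{s,p}(f)^p = (2^{sp} Γ((n+sp)/2) / π^{n/2}) · [f]_{s,p}^p, where [f]_{s,p}^p = ∫_{ℝ^n}∫_{ℝ^n} |f(x)-f(y)|^p / |x-y|^{n+ps} dx dy (both sides possibly being +∞). -/
set_option maxHeartbeats 1000000

open MeasureTheory Real ENNReal Set


lemma timeIntegral (a b : ℝ) (ha : 0 < a) (hb : 0 < b) :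
    ∫⁻ t in Set.Ioi (0:ℝ), ENNReal.ofReal (t ^ (-a - 1) * Real.exp (-b / t)) =
      ENNReal.ofReal (Real.Gamma a * b ^ (-a)) := by
  set g : ℝ → ℝ := fun u => Real.exp (-u) * u ^ (a - 1) with hgdef
  have hg : IntegrableOn g (Ioi 0) := Real.GammaIntegral_convergent ha
  have hF : IntegrableOn (fun x => g (b * x)) (Ioi 0) := by
    refine (integrableOn_Ioi_comp_mul_left_iff g 0 hb).mpr ?_
    simpa using hg
  have hFint : ∫ x in Ioi 0, g (b * x) = b⁻¹ * Real.Gamma a := by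
    rw [integral_comp_mul_left_Ioi g 0 hb, mul_zero, smul_eq_mul, Real.Gamma_eq_integral ha]
  have key := integral_comp_rpow_Ioi (fun u => g (b * u)) (p := (-1:ℝ)) (by norm_num)
  have hh : IntegrableOn
      (fun x : ℝ => (|(-1:ℝ)| * x ^ ((-1:ℝ) - 1)) • g (b * x ^ (-1:ℝ))) (Ioi 0) :=
    (integrableOn_Ioi_comp_rpow_iff (fun u => g (b * u)) (p := (-1:ℝ)) (by norm_num)).mpr hF
  have hEq : ∀ x ∈ Ioi (0:ℝ),
      (|(-1:ℝ)| * x ^ ((-1:ℝ) - 1)) • g (b * x ^ (-1:ℝ))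
        = b ^ (a - 1) * (x ^ (-a - 1) * Real.exp (-b / x)) := by
    intro x hx
    have hx0 : (0:ℝ) < x := hx
    have h1 : x ^ ((-1:ℝ)) = x⁻¹ := Real.rpow_neg_one x
    rw [h1, smul_eq_mul, hgdef]
    simp only [abs_neg, abs_one, one_mul]
    have h2 : (b * x⁻¹) ^ (a - 1) = b ^ (a - 1) * x ^ (-(a - 1)) := by
      rw [Real.mul_rpow hb.le (inv_nonneg.mpr hx0.le), Real.inv_rpow hx0.le,
        ← Real.rpow_neg hx0.le]
    have h3 : x ^ ((-1:ℝ) - 1) = x ^ (-2 : ℝ) := by norm_num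
    rw [h2, h3]
    have h4 : x ^ (-2:ℝ) * x ^ (-(a-1)) = x ^ (-a - 1) := by
      rw [← Real.rpow_add hx0]; ring_nf
    have h5 : -(b * x⁻¹) = -b / x := by field_simp
    rw [h5]
    calc x ^ (-2:ℝ) * (Real.exp (-b / x) * (b ^ (a-1) * x ^ (-(a-1))))
        = b ^ (a-1) * ((x ^ (-2:ℝ) * x ^ (-(a-1))) * Real.exp (-b/x)) := by ring
      _ = b ^ (a - 1) * (x ^ (-a - 1) * Real.exp (-b / x)) := by rw [h4]
  have hInt : IntegrableOn (fun x : ℝ => b ^ (a-1) * (x ^ (-a - 1) * Real.exp (-b / x))) (Ioi 0) :=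
    hh.congr_fun hEq measurableSet_Ioi
  have hbpow : (0:ℝ) < b ^ (a - 1) := Real.rpow_pos_of_pos hb _
  have hInt2 : IntegrableOn (fun x : ℝ => x ^ (-a - 1) * Real.exp (-b / x)) (Ioi 0) :=
    (integrable_const_mul_iff (isUnit_iff_ne_zero.mpr hbpow.ne') _).mp hInt
  have hval : ∫ x in Ioi 0, x ^ (-a - 1) * Real.exp (-b / x) = Real.Gamma a * b ^ (-a) := by
    have e1 : ∫ x in Ioi 0, b ^ (a-1) * (x ^ (-a - 1) * Real.exp (-b / x)) = b⁻¹ * Real.Gamma a := by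
      rw [← setIntegral_congr_fun measurableSet_Ioi hEq, key, hFint]
    rw [integral_const_mul] at e1
    have : ∫ x in Ioi 0, x ^ (-a - 1) * Real.exp (-b / x) = b⁻¹ * Real.Gamma a / b ^ (a-1) := by
      field_simp at e1 ⊢; linarith [e1]
    rw [this, ← Real.rpow_neg_one b, div_eq_mul_inv, ← Real.rpow_neg hb.le,
      mul_comm (b ^ (-1:ℝ)) (Real.Gamma a), mul_assoc, ← Real.rpow_add hb]
    ring_nf
  rw [← hval, ofReal_integral_eq_lintegral_ofReal hInt2]
  filter_upwards [ae_restrict_mem measurableSet_Ioi] with x hx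
  exact mul_nonneg (Real.rpow_nonneg (le_of_lt hx) _) (Real.exp_pos _).le

lemma ptwise (n : ℕ) (s p : ℝ) (hs0 : 0 < s) (hp : 0 < p) (r A : ℝ) (hr : 0 ≤ r) (hA : 0 ≤ A)
    (h0 : r = 0 → A = 0) :
    (∫⁻ t in Set.Ioi (0:ℝ), ENNReal.ofReal (t ^ (-(s * p / 2 + 1))) *
        (ENNReal.ofReal ((4 * π * t) ^ (-(n:ℝ) / 2)) *
          ENNReal.ofReal (Real.exp (-r ^ 2 / (4 * t)) * A)))
      = ENNReal.ofReal (2 ^ (s * p) * Real.Gamma (((n:ℝ) + s * p) / 2) / π ^ ((n:ℝ) / 2)) *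
        ENNReal.ofReal (A / r ^ ((n:ℝ) + p * s)) := by
  rcases eq_or_lt_of_le hr with hr0 | hrpos
  · simp [h0 hr0.symm]
  set N : ℝ := (n:ℝ) with hN
  have hNnn : 0 ≤ N := Nat.cast_nonneg n
  set a : ℝ := (N + s * p) / 2 with ha
  have hapos : 0 < a := by positivity
  set b : ℝ := r ^ 2 / 4 with hb
  have hbpos : 0 < b := by positivity
  have hC0 : 0 ≤ (4 * π) ^ (-N / 2) * A := by positivity
  have e : ∀ t ∈ Ioi (0:ℝ),
      ENNReal.ofReal (t ^ (-(s * p / 2 + 1))) *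
        (ENNReal.ofReal ((4 * π * t) ^ (-N / 2)) *
          ENNReal.ofReal (Real.exp (-r ^ 2 / (4 * t)) * A))
      = ENNReal.ofReal ((4 * π) ^ (-N / 2) * A) *
          ENNReal.ofReal (t ^ (-a - 1) * Real.exp (-b / t)) := by
    intro t ht
    have ht0 : (0:ℝ) < t := ht
    rw [← ENNReal.ofReal_mul (by positivity), ← ENNReal.ofReal_mul (by positivity),
      ← ENNReal.ofReal_mul hC0]
    congr 1
    have h1 : (4 * π * t) ^ (-N / 2) = (4 * π) ^ (-N / 2) * t ^ (-N / 2) :=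
      Real.mul_rpow (by positivity) ht0.le
    have h2 : t ^ (-(s * p / 2 + 1)) * t ^ (-N / 2) = t ^ (-a - 1) := by
      rw [← Real.rpow_add ht0]; congr 1; rw [ha]; ring
    have h3 : -r ^ 2 / (4 * t) = -b / t := by rw [hb]; ring
    calc t ^ (-(s * p / 2 + 1)) * ((4 * π * t) ^ (-N / 2) * (Real.exp (-r ^ 2 / (4 * t)) * A))
        = (4 * π) ^ (-N / 2) * A * ((t ^ (-(s * p / 2 + 1)) * t ^ (-N / 2)) *
            Real.exp (-r ^ 2 / (4 * t))) := by rw [h1]; ring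
      _ = (4 * π) ^ (-N / 2) * A * (t ^ (-a - 1) * Real.exp (-b / t)) := by rw [h2, h3]
  rw [setLIntegral_congr_fun measurableSet_Ioi e,
    lintegral_const_mul' _ _ ENNReal.ofReal_ne_top, timeIntegral a b hapos hbpos,
    ← ENNReal.ofReal_mul hC0]
  have hΓ : 0 < Real.Gamma a := Real.Gamma_pos_of_pos hapos
  rw [← ENNReal.ofReal_mul (by positivity)]
  congr 1
  -- real arithmetic identity
  have h4π : (4 * π : ℝ) ^ (-N / 2) = (2:ℝ) ^ (-N) * π ^ (-N / 2) := by
    rw [Real.mul_rpow (by norm_num) pi_pos.le]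
    congr 1
    rw [show (4:ℝ) = 2 ^ (2:ℕ) by norm_num, ← Real.rpow_natCast 2 2,
      ← Real.rpow_mul (by norm_num : (0:ℝ) ≤ 2)]
    congr 1; push_cast; ring
  have hbpow : b ^ (-a) = r ^ (-(N + s * p)) * (2:ℝ) ^ (N + s * p) := by
    rw [hb, Real.div_rpow (sq_nonneg r) (by norm_num : (0:ℝ) ≤ 4)]
    have h1 : ((r:ℝ) ^ 2) ^ (-a) = r ^ (-(N + s * p)) := by
      rw [← Real.rpow_natCast r 2, ← Real.rpow_mul hr]
      congr 1; rw [ha]; push_cast; ring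
    have h2 : ((4:ℝ)) ^ (-a) = ((2:ℝ) ^ (N + s * p))⁻¹ := by
      rw [show (4:ℝ) = 2 ^ (2:ℕ) by norm_num, ← Real.rpow_natCast 2 2,
        ← Real.rpow_mul (by norm_num : (0:ℝ) ≤ 2), ← Real.rpow_neg (by norm_num : (0:ℝ) ≤ 2)]
      congr 1; rw [ha]; push_cast; ring
    rw [h1, h2, div_eq_mul_inv, inv_inv]
  rw [h4π, hbpow]
  have k2 : (2:ℝ) ^ (-N) * (2:ℝ) ^ (N + s * p) = 2 ^ (s * p) := by
    rw [← Real.rpow_add (by norm_num : (0:ℝ) < 2)]; congr 1; ring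
  have kπ : (π:ℝ) ^ (-N / 2) = (π ^ (N / 2))⁻¹ := by
    rw [← Real.rpow_neg pi_pos.le]; congr 1; ring
  have kr : r ^ (-(N + s * p)) = (r ^ (N + p * s))⁻¹ := by
    rw [show N + s * p = N + p * s from by ring, Real.rpow_neg hr]
  rw [kπ, kr]
  conv_rhs => rw [← k2]
  have hπ2 : (0:ℝ) < π ^ (N / 2) := Real.rpow_pos_of_pos pi_pos _
  have hr2 : (0:ℝ) < r ^ (N + p * s) := Real.rpow_pos_of_pos hrpos _
  field_simp

/-- The caloric Besov seminorm identity
`𝒩^Δ_{s,p}(f)^p = (2^{sp} Γ((n+sp)/2) / π^{n/2}) · [f]_{s,p}^p`,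
both sides possibly being `+∞`. -/
theorem stmt_1 (n : ℕ) (s p : ℝ) (hs0 : 0 < s) (hs1 : s < 1) (hp : 1 ≤ p)
    (f : EuclideanSpace ℝ (Fin n) → ℝ) (hf : Measurable f) :
    (∫⁻ t in Set.Ioi (0 : ℝ),
        ENNReal.ofReal (t ^ (-(s * p / 2 + 1))) *
          ∫⁻ x, ENNReal.ofReal ((4 * π * t) ^ (-(n : ℝ) / 2)) *
            ∫⁻ y, ENNReal.ofReal
              (Real.exp (-‖x - y‖ ^ 2 / (4 * t)) * |f y - f x| ^ p))
    = ENNReal.ofReal (2 ^ (s * p) * Real.Gamma ((n + s * p) / 2) / π ^ ((n : ℝ) / 2)) *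
        ∫⁻ x, ∫⁻ y, ENNReal.ofReal (|f x - f y| ^ p / ‖x - y‖ ^ ((n : ℝ) + p * s)) := by
  have hp0 : (0:ℝ) < p := lt_of_lt_of_le one_pos hp
  set K : ℝ → EuclideanSpace ℝ (Fin n) → EuclideanSpace ℝ (Fin n) → ℝ≥0∞ :=
    fun t x y => ENNReal.ofReal (t ^ (-(s * p / 2 + 1))) *
      (ENNReal.ofReal ((4 * π * t) ^ (-(n:ℝ) / 2)) *
        ENNReal.ofReal (Real.exp (-‖x - y‖ ^ 2 / (4 * t)) * |f y - f x| ^ p)) with hK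
  have hKm : Measurable (fun q : (ℝ × EuclideanSpace ℝ (Fin n)) × EuclideanSpace ℝ (Fin n) =>
      K q.1.1 q.1.2 q.2) := by rw [hK]; fun_prop
  calc
    (∫⁻ t in Set.Ioi (0 : ℝ),
        ENNReal.ofReal (t ^ (-(s * p / 2 + 1))) *
          ∫⁻ x, ENNReal.ofReal ((4 * π * t) ^ (-(n : ℝ) / 2)) *
            ∫⁻ y, ENNReal.ofReal
              (Real.exp (-‖x - y‖ ^ 2 / (4 * t)) * |f y - f x| ^ p))
      = ∫⁻ t in Set.Ioi (0:ℝ), ∫⁻ x, ∫⁻ y, K t x y := by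
        refine lintegral_congr fun t => ?_
        rw [← lintegral_const_mul' _ _ ENNReal.ofReal_ne_top]
        refine lintegral_congr fun x => ?_
        rw [← lintegral_const_mul' _ _ ENNReal.ofReal_ne_top,
          ← lintegral_const_mul' _ _ ENNReal.ofReal_ne_top]
    _ = ∫⁻ x, ∫⁻ t in Set.Ioi (0:ℝ), ∫⁻ y, K t x y := by
        exact lintegral_lintegral_swap hKm.lintegral_prod_right'.aemeasurable
    _ = ∫⁻ x, ∫⁻ y, ∫⁻ t in Set.Ioi (0:ℝ), K t x y := by
        refine lintegral_congr fun x => ?_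
        exact lintegral_lintegral_swap
          (hKm.comp ((measurable_fst.prodMk measurable_const).prodMk
            measurable_snd)).aemeasurable
    _ = ∫⁻ x, ∫⁻ y, ENNReal.ofReal (2 ^ (s * p) * Real.Gamma (((n:ℝ) + s * p) / 2) / π ^ ((n:ℝ) / 2)) *
          ENNReal.ofReal (|f x - f y| ^ p / ‖x - y‖ ^ ((n : ℝ) + p * s)) := by
        refine lintegral_congr fun x => lintegral_congr fun y => ?_
        have h0 : ‖x - y‖ = 0 → |f y - f x| ^ p = 0 := by
          intro h
          have hxy : x = y := by rwa [norm_sub_eq_zero_iff] at h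
          rw [hxy, sub_self, abs_zero, Real.zero_rpow hp0.ne']
        have := ptwise n s p hs0 hp0 ‖x - y‖ (|f y - f x| ^ p) (norm_nonneg _)
          (Real.rpow_nonneg (abs_nonneg _) _) h0
        rw [hK]
        rw [this, abs_sub_comm (f y) (f x)]
    _ = ENNReal.ofReal (2 ^ (s * p) * Real.Gamma ((n + s * p) / 2) / π ^ ((n : ℝ) / 2)) *
        ∫⁻ x, ∫⁻ y, ENNReal.ofReal (|f x - f y| ^ p / ‖x - y‖ ^ ((n : ℝ) + p * s)) := by
        simp_rw [lintegral_const_mul' _ _ ENNReal.ofReal_ne_top]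
end

section
/- Let (P_t)_{t>0} be a family of linear operators on L^1 of a measure space such that ‖P_t u‖_1 ≤ ‖u‖_1 for all u and t > 0. Let E be a measurable set with finite measure, and define Φ(s) = ∫_0^∞ t^{-(1+s)} ‖P_t 1_E - 1_E‖_1 dt for 0 < s < 1/2. Then limsup_{s→(1/2)^-} (1-2s) Φ(s) ≤ limsup_{t→0^+} (4/t)^{1/2} ‖P_t 1_E - 1_E‖_1. -/
open MeasureTheory Filter Set

/-- If `(P_t)` is a family of linear contractions on `L¹` and `E` has finite measure, then
`limsup_{s→(1/2)⁻} (1-2s) Φ(s) ≤ limsup_{t→0⁺} √(4/t) ‖P_t 1_E - 1_E‖₁`, where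
`Φ(s) = ∫_0^∞ t^{-(1+s)} ‖P_t 1_E - 1_E‖₁ dt`. -/
theorem stmt_3 {α : Type*} [MeasurableSpace α] {μ : Measure α}
    (P : ℝ → (Lp ℝ 1 μ →ₗ[ℝ] Lp ℝ 1 μ))
    (hcontr : ∀ t > (0 : ℝ), ∀ u : Lp ℝ 1 μ, ‖P t u‖ ≤ ‖u‖)
    (E : Set α) (hE : MeasurableSet E) (hEfin : μ E ≠ ⊤) :
    limsup (fun s : ℝ => ENNReal.ofReal (1 - 2 * s) *
        ∫⁻ t in Ioi (0 : ℝ), ENNReal.ofReal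
          (t ^ (-(1 + s)) * ‖P t (indicatorConstLp 1 hE hEfin (1 : ℝ)) -
            indicatorConstLp 1 hE hEfin (1 : ℝ)‖))
      (nhdsWithin (1 / 2 : ℝ) (Iio (1 / 2)))
    ≤ limsup (fun t : ℝ => ENNReal.ofReal
        (Real.sqrt (4 / t) * ‖P t (indicatorConstLp 1 hE hEfin (1 : ℝ)) -
          indicatorConstLp 1 hE hEfin (1 : ℝ)‖)) (nhdsWithin (0 : ℝ) (Ioi 0)) := by
  set f := indicatorConstLp 1 hE hEfin (1 : ℝ) with hf
  set g : ℝ → ℝ := fun t => ‖P t f - f‖ with hgdef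
  set M : ℝ := 2 * ‖f‖ with hMdef
  have hg0 : ∀ t, 0 ≤ g t := fun t => norm_nonneg _
  have hM0 : 0 ≤ M := by positivity
  have hgM : ∀ t, 0 < t → g t ≤ M := by
    intro t ht
    calc ‖P t f - f‖ ≤ ‖P t f‖ + ‖f‖ := norm_sub_le _ _
      _ ≤ ‖f‖ + ‖f‖ := add_le_add_left (hcontr t ht f) _
      _ = M := by ring
  refine le_of_forall_gt_imp_ge_of_dense ?_
  intro c hc
  rcases eq_or_ne c ⊤ with rfl | hctop
  · exact le_top
  have hev : ∀ᶠ t in nhdsWithin (0 : ℝ) (Ioi 0),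
      ENNReal.ofReal (Real.sqrt (4 / t) * g t) < c :=
    eventually_lt_of_limsup_lt hc
  rcases mem_nhdsGT_iff_exists_Ioo_subset.mp hev with ⟨δ₀, hδ₀, hsub⟩
  have hδ₀0 : (0 : ℝ) < δ₀ := hδ₀
  set C : ℝ := c.toReal with hCdef
  have hC0 : 0 ≤ C := ENNReal.toReal_nonneg
  set δ : ℝ := δ₀ / 2 with hδdef
  have hδ0 : (0 : ℝ) < δ := by positivity
  have hgt : ∀ t ∈ Ioc (0:ℝ) δ, g t ≤ C / 2 * Real.sqrt t := by
    intro t ht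
    have ht0 : (0:ℝ) < t := ht.1
    have htδ : t < δ₀ := lt_of_le_of_lt ht.2 (by simp [hδdef]; linarith)
    have h1 : ENNReal.ofReal (Real.sqrt (4 / t) * g t) < c := hsub ⟨ht0, htδ⟩
    have h2 : Real.sqrt (4 / t) * g t ≤ C :=
      (ENNReal.ofReal_le_iff_le_toReal hctop).mp h1.le
    have hst : (0:ℝ) < Real.sqrt t := Real.sqrt_pos.mpr ht0
    have hmul : Real.sqrt (4 / t) * Real.sqrt t = 2 := by
      rw [← Real.sqrt_mul (by positivity) t, div_mul_cancel₀ _ ht0.ne',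
        show (4:ℝ) = 2^2 by norm_num, Real.sqrt_sq (by norm_num : (0:ℝ) ≤ 2)]
    nlinarith [mul_le_mul_of_nonneg_right h2 hst.le, hmul, hg0 t, hst]
  -- the comparison function
  set h : ℝ → ℝ := fun s =>
    (1 - 2*s) * (C / 2 * (δ ^ ((1:ℝ)/2 - s) / ((1:ℝ)/2 - s)) + M * (δ ^ (-s) / s)) with hhdef
  -- main pointwise bound
  have key : ∀ s ∈ Ioo (0:ℝ) (1/2),
      ENNReal.ofReal (1 - 2 * s) *
        (∫⁻ t in Ioi (0 : ℝ), ENNReal.ofReal (t ^ (-(1 + s)) * g t))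
        ≤ ENNReal.ofReal (h s) := by
    intro s hs
    have hs0 : (0:ℝ) < s := hs.1
    have hs2 : s < 1/2 := hs.2
    have hr : (-1:ℝ) < -(1/2 + s) := by linarith
    have hr1 : (0:ℝ) < -(1/2 + s) + 1 := by linarith
    -- split the integral
    have hsplit : Ioi (0:ℝ) = Ioc 0 δ ∪ Ioi δ := (Ioc_union_Ioi_eq_Ioi hδ0.le).symm
    rw [hsplit, lintegral_union measurableSet_Ioi Ioc_disjoint_Ioi_same]
    -- piece 1
    have b1 : (∫⁻ t in Ioc (0:ℝ) δ, ENNReal.ofReal (t ^ (-(1 + s)) * g t))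
        ≤ ENNReal.ofReal (C / 2 * (δ ^ ((1:ℝ)/2 - s) / ((1:ℝ)/2 - s))) := by
      have step : (∫⁻ t in Ioc (0:ℝ) δ, ENNReal.ofReal (t ^ (-(1 + s)) * g t))
          ≤ ∫⁻ t in Ioc (0:ℝ) δ, ENNReal.ofReal (C / 2 * t ^ (-(1/2 + s) : ℝ)) := by
        apply setLIntegral_mono' measurableSet_Ioc
        intro t ht
        apply ENNReal.ofReal_le_ofReal
        have ht0 : (0:ℝ) < t := ht.1
        have : t ^ (-(1 + s)) * g t ≤ t ^ (-(1 + s)) * (C / 2 * Real.sqrt t) := by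
          apply mul_le_mul_of_nonneg_left (hgt t ht) (Real.rpow_nonneg ht0.le _)
        refine this.trans (le_of_eq ?_)
        rw [Real.sqrt_eq_rpow, show (-(1/2 + s) : ℝ) = -(1+s) + 1/2 by ring,
          Real.rpow_add ht0]
        ring
      refine step.trans (le_of_eq ?_)
      have hint0 : IntegrableOn (fun t : ℝ => t ^ (-(1/2 + s) : ℝ)) (Ioc 0 δ) := by
        rw [← intervalIntegrable_iff_integrableOn_Ioc_of_le hδ0.le]
        exact intervalIntegral.intervalIntegrable_rpow' hr
      have hint : IntegrableOn (fun t : ℝ => C / 2 * t ^ (-(1/2 + s) : ℝ)) (Ioc 0 δ) :=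
        hint0.const_mul (C/2)
      rw [← ofReal_integral_eq_lintegral_ofReal hint]
      · congr 1
        rw [MeasureTheory.integral_const_mul, ← intervalIntegral.integral_of_le hδ0.le,
          integral_rpow (Or.inl hr), Real.zero_rpow hr1.ne', sub_zero,
          show (-(1/2 + s) + 1 : ℝ) = (1:ℝ)/2 - s by ring]
      · filter_upwards [ae_restrict_mem measurableSet_Ioc] with t ht
        have ht0 : (0:ℝ) < t := ht.1
        positivity
    -- piece 2
    have b2 : (∫⁻ t in Ioi δ, ENNReal.ofReal (t ^ (-(1 + s)) * g t))
        ≤ ENNReal.ofReal (M * (δ ^ (-s) / s)) := by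
      have ha : (-(1+s) : ℝ) < -1 := by linarith
      have step : (∫⁻ t in Ioi δ, ENNReal.ofReal (t ^ (-(1 + s)) * g t))
          ≤ ∫⁻ t in Ioi δ, ENNReal.ofReal (M * t ^ (-(1 + s))) := by
        apply setLIntegral_mono' measurableSet_Ioi
        intro t ht
        apply ENNReal.ofReal_le_ofReal
        have ht0 : (0:ℝ) < t := hδ0.trans ht
        calc t ^ (-(1 + s)) * g t ≤ t ^ (-(1 + s)) * M :=
              mul_le_mul_of_nonneg_left (hgM t ht0) (Real.rpow_nonneg ht0.le _)
          _ = M * t ^ (-(1 + s)) := by ring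
      refine step.trans (le_of_eq ?_)
      have hint : IntegrableOn (fun t : ℝ => M * t ^ (-(1+s) : ℝ)) (Ioi δ) :=
        (integrableOn_Ioi_rpow_of_lt ha hδ0).const_mul M
      rw [← ofReal_integral_eq_lintegral_ofReal hint]
      · congr 1
        rw [MeasureTheory.integral_const_mul, integral_Ioi_rpow_of_lt ha hδ0]
        congr 1
        rw [show (-(1+s) + 1 : ℝ) = -s by ring]
        field_simp
      · filter_upwards [ae_restrict_mem measurableSet_Ioi] with t ht
        have ht0 : (0:ℝ) < t := hδ0.trans ht
        positivity
    calc ENNReal.ofReal (1 - 2*s) *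
          ((∫⁻ t in Ioc (0:ℝ) δ, ENNReal.ofReal (t ^ (-(1 + s)) * g t)) +
            ∫⁻ t in Ioi δ, ENNReal.ofReal (t ^ (-(1 + s)) * g t))
        ≤ ENNReal.ofReal (1 - 2*s) *
          (ENNReal.ofReal (C / 2 * (δ ^ ((1:ℝ)/2 - s) / ((1:ℝ)/2 - s))) +
            ENNReal.ofReal (M * (δ ^ (-s) / s))) := by
          exact mul_le_mul_right (add_le_add b1 b2) _
      _ = ENNReal.ofReal (h s) := by
          rw [← ENNReal.ofReal_add
              (mul_nonneg (by positivity)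
                (div_nonneg (Real.rpow_nonneg hδ0.le _) (by linarith)))
              (mul_nonneg hM0 (div_nonneg (Real.rpow_nonneg hδ0.le _) hs0.le)),
            ← ENNReal.ofReal_mul (by linarith)]
  -- eventual bound
  have hev2 : ∀ᶠ s in nhdsWithin (1/2 : ℝ) (Iio (1/2)),
      ENNReal.ofReal (1 - 2 * s) *
        (∫⁻ t in Ioi (0 : ℝ), ENNReal.ofReal (t ^ (-(1 + s)) * g t))
        ≤ ENNReal.ofReal (h s) := by
    filter_upwards [Ioo_mem_nhdsLT_of_mem
      (show (1/2:ℝ) ∈ Ioc 0 (1/2) by constructor <;> norm_num)] with s hs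
    exact key s hs
  -- limit of h
  have hlim : Tendsto h (nhdsWithin (1/2 : ℝ) (Iio (1/2))) (nhds C) := by
    have heq : ∀ s ∈ Iio (1/2 : ℝ),
        h s = C * δ ^ ((1:ℝ)/2 - s) + (1 - 2*s) * (M * (δ ^ (-s) / s)) := by
      intro s hs
      have hne : ((1:ℝ)/2 - s) ≠ 0 := by simp only [mem_Iio] at hs; intro h'; linarith
      have e1 : (1 - 2*s) * (C / 2 * (δ ^ ((1:ℝ)/2 - s) / ((1:ℝ)/2 - s)))
          = C * δ ^ ((1:ℝ)/2 - s) := by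
        have hne2 : (1 - 2*s : ℝ) ≠ 0 := fun h' => hne (by linarith)
        rw [show (1 - 2*s : ℝ) = 2*((1:ℝ)/2 - s) by ring]
        field_simp
      calc h s = (1 - 2*s) * (C / 2 * (δ ^ ((1:ℝ)/2 - s) / ((1:ℝ)/2 - s)))
            + (1 - 2*s) * (M * (δ ^ (-s) / s)) := by rw [hhdef]; ring
        _ = _ := by rw [e1]
    have hcont : Tendsto (fun s : ℝ => C * δ ^ ((1:ℝ)/2 - s) + (1 - 2*s) * (M * (δ ^ (-s) / s)))
        (nhdsWithin (1/2 : ℝ) (Iio (1/2))) (nhds C) := by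
      have : ContinuousAt (fun s : ℝ => C * δ ^ ((1:ℝ)/2 - s) + (1 - 2*s) * (M * (δ ^ (-s) / s)))
          (1/2 : ℝ) := by
        apply ContinuousAt.add
        · exact (continuousAt_const.mul ((Real.continuousAt_const_rpow hδ0.ne').comp
            (continuousAt_const.sub continuousAt_id)))
        · apply ContinuousAt.mul
          · exact continuousAt_const.sub (continuousAt_const.mul continuousAt_id)
          · apply continuousAt_const.mul
            apply ContinuousAt.div
            · exact (Real.continuousAt_const_rpow hδ0.ne').comp continuousAt_id.neg
            · exact continuousAt_id
            · norm_num
      have h2 := this.tendsto.mono_left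
        (nhdsWithin_le_nhds : nhdsWithin (1/2 : ℝ) (Iio (1/2)) ≤ nhds (1/2))
      convert h2 using 2
      norm_num [Real.rpow_zero]
    exact Tendsto.congr' (by
      filter_upwards [self_mem_nhdsWithin] with s hs
      exact (heq s hs).symm) hcont
  have hlim' : Tendsto (fun s => ENNReal.ofReal (h s))
      (nhdsWithin (1/2 : ℝ) (Iio (1/2))) (nhds (ENNReal.ofReal C)) :=
    ENNReal.tendsto_ofReal hlim
  calc limsup (fun s : ℝ => ENNReal.ofReal (1 - 2 * s) *
        ∫⁻ t in Ioi (0 : ℝ), ENNReal.ofReal (t ^ (-(1 + s)) * g t))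
        (nhdsWithin (1/2 : ℝ) (Iio (1/2)))
      ≤ limsup (fun s => ENNReal.ofReal (h s)) (nhdsWithin (1/2 : ℝ) (Iio (1/2))) :=
        limsup_le_limsup hev2
    _ = ENNReal.ofReal C := hlim'.limsup_eq
    _ ≤ c := by rw [hCdef, ENNReal.ofReal_toReal hctop]
end

section
/- Let (P_t)_{t>0} be any family of linear operators on L^1 of a measure space, E a measurable set, and define Φ(s) = ∫_0^∞ t^{-(1+s)} ‖P_t 1_E - 1_E‖_1 dt for 0 < s < 1/2 (with values in [0,∞]). Then liminf_{s→(1/2)^-} (1-2s) Φ(s) ≥ liminf_{t→0^+} (4/t)^{1/2} ‖P_t 1_E - 1_E‖_1. -/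
open MeasureTheory Filter Set

lemma stmt4_aux_int {s ε : ℝ} (hs0 : 0 < s) (hs : s < 1/2) (hε : 0 < ε) :
    ∫⁻ t in Ioo (0:ℝ) ε, ENNReal.ofReal (t ^ (-(1/2:ℝ) - s) / 2) =
    ENNReal.ofReal (ε ^ ((1:ℝ)/2 - s) / (1 - 2 * s)) := by
  have hr : (-1 : ℝ) < -(1/2:ℝ) - s := by linarith
  have hint : IntervalIntegrable (fun t : ℝ => t ^ (-(1/2:ℝ) - s)) volume 0 ε :=
    intervalIntegral.intervalIntegrable_rpow' hr
  have hInt : IntegrableOn (fun t : ℝ => t ^ (-(1/2:ℝ) - s) / 2) (Ioo (0:ℝ) ε) volume := by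
    have := (intervalIntegrable_iff_integrableOn_Ioc_of_le hε.le).mp hint
    exact (this.mono_set Ioo_subset_Ioc_self).div_const 2
  rw [← ofReal_integral_eq_lintegral_ofReal hInt]
  · congr 1
    have h1 : ∫ t in Ioo (0:ℝ) ε, t ^ (-(1/2:ℝ) - s) / 2
        = (∫ t in Ioo (0:ℝ) ε, t ^ (-(1/2:ℝ) - s)) / 2 := by
      simp [integral_div]
    have h2 : ∫ t in Ioo (0:ℝ) ε, t ^ (-(1/2:ℝ) - s)
        = ∫ t in (0:ℝ)..ε, t ^ (-(1/2:ℝ) - s) := by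
      rw [intervalIntegral.integral_of_le hε.le, integral_Ioc_eq_integral_Ioo]
    have h3 : ∫ t in (0:ℝ)..ε, t ^ (-(1/2:ℝ) - s)
        = (ε ^ (-(1/2:ℝ) - s + 1) - (0:ℝ) ^ (-(1/2:ℝ) - s + 1)) / (-(1/2:ℝ) - s + 1) :=
      integral_rpow (Or.inl hr)
    have h0 : (0:ℝ) ^ (-(1/2:ℝ) - s + 1) = 0 := Real.zero_rpow (by linarith)
    rw [h1, h2, h3, h0]
    have : -(1/2:ℝ) - s + 1 = (1:ℝ)/2 - s := by ring
    rw [this, sub_zero, div_div]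
    congr 1
    ring
  · filter_upwards [self_mem_ae_restrict measurableSet_Ioo] with t ht
    have : (0:ℝ) < t ^ (-(1/2:ℝ) - s) := Real.rpow_pos_of_pos ht.1 _
    positivity

/-- For any family of linear operators on `L¹`,
`liminf_{s→(1/2)⁻} (1-2s) Φ(s) ≥ liminf_{t→0⁺} √(4/t) ‖P_t 1_E - 1_E‖₁`, where
`Φ(s) = ∫_0^∞ t^{-(1+s)} ‖P_t 1_E - 1_E‖₁ dt` (with values in `[0,∞]`). -/
theorem stmt_4 {α : Type*} [MeasurableSpace α] {μ : Measure α}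
    (P : ℝ → (Lp ℝ 1 μ →ₗ[ℝ] Lp ℝ 1 μ))
    (E : Set α) (hE : MeasurableSet E) (hEfin : μ E ≠ ⊤) :
    liminf (fun t : ℝ => ENNReal.ofReal
        (Real.sqrt (4 / t) * ‖P t (indicatorConstLp 1 hE hEfin (1 : ℝ)) -
          indicatorConstLp 1 hE hEfin (1 : ℝ)‖)) (nhdsWithin (0 : ℝ) (Ioi 0))
    ≤ liminf (fun s : ℝ => ENNReal.ofReal (1 - 2 * s) *
        ∫⁻ t in Ioi (0 : ℝ), ENNReal.ofReal
          (t ^ (-(1 + s)) * ‖P t (indicatorConstLp 1 hE hEfin (1 : ℝ)) -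
            indicatorConstLp 1 hE hEfin (1 : ℝ)‖))
      (nhdsWithin (1 / 2 : ℝ) (Iio (1 / 2))) := by
  set f := indicatorConstLp 1 hE hEfin (1 : ℝ) with hf
  set n : ℝ → ℝ := fun t => ‖P t f - f‖ with hn
  set g : ℝ → ENNReal := fun t => ENNReal.ofReal (Real.sqrt (4 / t) * n t) with hg
  set F : ℝ → ENNReal := fun s => ENNReal.ofReal (1 - 2 * s) *
      ∫⁻ t in Ioi (0 : ℝ), ENNReal.ofReal (t ^ (-(1 + s)) * n t) with hF
  show liminf g (nhdsWithin 0 (Ioi 0)) ≤ liminf F (nhdsWithin (1/2) (Iio (1/2)))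
  rw [liminf_eq]
  apply sSup_le
  rintro b hb
  -- b ≠ ⊤
  have hb' : ∀ᶠ t in nhdsWithin (0:ℝ) (Ioi 0), b ≤ g t := hb
  obtain ⟨t₀, ht₀⟩ := hb'.exists
  have hbtop : b ≠ ⊤ := ne_top_of_le_ne_top ENNReal.ofReal_ne_top ht₀
  -- extract ε
  obtain ⟨ε, hε, hsub⟩ := mem_nhdsGT_iff_exists_Ioo_subset.mp hb
  rw [mem_Ioi] at hε
  -- eventual lower bound on F
  have hev : ∀ᶠ s in nhdsWithin (1/2 : ℝ) (Iio (1/2)),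
      ENNReal.ofReal (ε ^ ((1:ℝ)/2 - s)) * b ≤ F s := by
    filter_upwards [eventually_mem_nhdsWithin,
      (eventually_gt_nhds (by norm_num : (0:ℝ) < 1/2)).filter_mono nhdsWithin_le_nhds]
      with s hs1 hs0
    rw [mem_Iio] at hs1
    have h12s : (0:ℝ) < 1 - 2 * s := by linarith
    -- pointwise bound on Ioo 0 ε
    have hpt : ∀ t ∈ Ioo (0:ℝ) ε,
        ENNReal.ofReal (t ^ (-(1/2:ℝ) - s) / 2) * b ≤ ENNReal.ofReal (t ^ (-(1 + s)) * n t) := by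
      intro t ht
      have htpos := ht.1
      have hbg : b ≤ g t := hsub ht
      have hsqrt : Real.sqrt (4 / t) = 2 * t ^ (-(1/2):ℝ) := by
        rw [show (4:ℝ)/t = (2 * t ^ (-(1/2):ℝ))^2 by
          rw [mul_pow, ← Real.rpow_natCast (t ^ (-(1/2):ℝ)) 2, ← Real.rpow_mul htpos.le]
          norm_num [Real.rpow_neg_one, div_eq_mul_inv]]
        exact Real.sqrt_sq (by positivity)
      have hkey : t ^ (-(1 + s)) * n t = (t ^ (-(1/2:ℝ) - s) / 2) * (Real.sqrt (4/t) * n t) := by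
        rw [hsqrt]
        have : t ^ (-(1/2:ℝ) - s) * t ^ (-(1/2):ℝ) = t ^ (-(1 + s)) := by
          rw [← Real.rpow_add htpos]; ring_nf
        rw [← this]; ring
      rw [hkey, ENNReal.ofReal_mul (by positivity)]
      exact mul_le_mul_right hbg _
    -- integral bound
    calc ENNReal.ofReal (ε ^ ((1:ℝ)/2 - s)) * b
        = ENNReal.ofReal (1 - 2*s) * (ENNReal.ofReal (ε ^ ((1:ℝ)/2 - s) / (1 - 2*s)) * b) := by
          rw [← mul_assoc, ← ENNReal.ofReal_mul h12s.le]
          congr 2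
          field_simp
      _ = ENNReal.ofReal (1 - 2*s) *
            ((∫⁻ t in Ioo (0:ℝ) ε, ENNReal.ofReal (t ^ (-(1/2:ℝ) - s) / 2)) * b) := by
          rw [stmt4_aux_int hs0 hs1 hε]
      _ = ENNReal.ofReal (1 - 2*s) *
            ∫⁻ t in Ioo (0:ℝ) ε, ENNReal.ofReal (t ^ (-(1/2:ℝ) - s) / 2) * b := by
          rw [lintegral_mul_const' b _ hbtop]
      _ ≤ ENNReal.ofReal (1 - 2*s) *
            ∫⁻ t in Ioo (0:ℝ) ε, ENNReal.ofReal (t ^ (-(1 + s)) * n t) := by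
          exact mul_le_mul_right (setLIntegral_mono' measurableSet_Ioo hpt) _
      _ ≤ F s :=
          mul_le_mul_right (lintegral_mono_set fun t ht => ht.1) _
  -- liminf comparison
  have htend : Tendsto (fun s : ℝ => ENNReal.ofReal (ε ^ ((1:ℝ)/2 - s)) * b)
      (nhdsWithin (1/2 : ℝ) (Iio (1/2))) (nhds b) := by
    have h1 : Tendsto (fun s : ℝ => ε ^ ((1:ℝ)/2 - s)) (nhds (1/2 : ℝ)) (nhds 1) := by
      have hc : ContinuousAt (fun s : ℝ => ε ^ ((1:ℝ)/2 - s)) (1/2 : ℝ) :=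
        ContinuousAt.rpow continuousAt_const (continuousAt_const.sub continuousAt_id)
          (Or.inl hε.ne')
      simpa using hc.tendsto
    have h2 : Tendsto (fun s : ℝ => ENNReal.ofReal (ε ^ ((1:ℝ)/2 - s)))
        (nhds (1/2 : ℝ)) (nhds 1) := by
      simpa [Function.comp_def] using (ENNReal.continuous_ofReal.tendsto 1).comp h1
    have h3 : Tendsto (fun s : ℝ => ENNReal.ofReal (ε ^ ((1:ℝ)/2 - s)))
        (nhdsWithin (1/2:ℝ) (Iio (1/2))) (nhds 1) := h2.mono_left nhdsWithin_le_nhds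
    simpa using ENNReal.Tendsto.mul_const h3 (Or.inr hbtop)
  rw [← htend.liminf_eq]
  exact liminf_le_liminf hev
end

section
/- For 0 < s < 1/2 and the Euclidean unit ball B ⊂ ℝ^n, the fractional perimeter P_s(B) = ∫_{ℝ^n}∫_{ℝ^n} |1_B(x) - 1_B(y)|/|x-y|^{n+2s} dx dy satisfies lim_{s→(1/2)^-} (1-2s) P_s(B) = (2π^{(n-1)/2}/Γ((n+1)/2)) · P(B), where P(B) = 2π^{n/2}/Γ(n/2) is the perimeter of B, given the explicit formula P_s(B) = n π^n Γ(1-2s) / (s Γ(n/2+1) Γ(1-s) Γ((n+2-2s)/2)). -/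
open MeasureTheory Real Filter Set

lemma gammaCont19 {x : ℝ} (hx : 0 < x) : ContinuousAt Real.Gamma x :=
  (Real.differentiableAt_Gamma (fun m =>
    ((neg_nonpos.mpr (Nat.cast_nonneg m)).trans_lt hx).ne')).continuousAt

/-- For the unit ball `B ⊂ ℝ^n`, given the explicit formula
`P_s(B) = n π^n Γ(1-2s) / (s Γ(n/2+1) Γ(1-s) Γ((n+2-2s)/2))` for the fractional perimeter
`P_s(B) = ∬ |1_B(x)-1_B(y)|/|x-y|^{n+2s}`, one has
`lim_{s→(1/2)⁻} (1-2s) P_s(B) = (2π^{(n-1)/2}/Γ((n+1)/2)) · P(B)` with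
`P(B) = 2π^{n/2}/Γ(n/2)`. -/
theorem stmt_19 (n : ℕ) (hn : 1 ≤ n) (P : ℝ → ℝ)
    (hPdef : ∀ s ∈ Ioo (0 : ℝ) (1 / 2), P s =
      ∫ x : EuclideanSpace ℝ (Fin n), ∫ y : EuclideanSpace ℝ (Fin n),
        |(Metric.ball (0 : EuclideanSpace ℝ (Fin n)) 1).indicator (fun _ => (1 : ℝ)) x -
            (Metric.ball (0 : EuclideanSpace ℝ (Fin n)) 1).indicator (fun _ => (1 : ℝ)) y| /
          ‖x - y‖ ^ ((n : ℝ) + 2 * s))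
    (hPformula : ∀ s ∈ Ioo (0 : ℝ) (1 / 2), P s =
      n * π ^ n * Real.Gamma (1 - 2 * s) /
        (s * Real.Gamma ((n : ℝ) / 2 + 1) * Real.Gamma (1 - s) *
          Real.Gamma (((n : ℝ) + 2 - 2 * s) / 2))) :
    Tendsto (fun s : ℝ => (1 - 2 * s) * P s) (nhdsWithin (1 / 2 : ℝ) (Iio (1 / 2)))
      (nhds (2 * π ^ ((n - 1 : ℝ) / 2) / Real.Gamma (((n : ℝ) + 1) / 2) *
        (2 * π ^ ((n : ℝ) / 2) / Real.Gamma ((n : ℝ) / 2)))) := by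
  have hπ : (0:ℝ) < π := pi_pos
  have hn' : (0:ℝ) < n := by exact_mod_cast hn
  set g : ℝ → ℝ := fun s => Real.Gamma (2 - 2*s) * ((n:ℝ) * π ^ n) /
      (s * Real.Gamma ((n : ℝ) / 2 + 1) * Real.Gamma (1 - s) *
        Real.Gamma (((n : ℝ) + 2 - 2 * s) / 2)) with hgdef
  set V : ℝ := Real.Gamma 1 * ((n:ℝ) * π ^ n) /
      ((1/2) * Real.Gamma ((n : ℝ) / 2 + 1) * Real.Gamma (1/2) *
        Real.Gamma (((n : ℝ) + 1) / 2)) with hVdef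
  have h1 := Real.Gamma_pos_of_pos (show (0:ℝ) < (n:ℝ)/2 + 1 by positivity)
  have h2 := Real.Gamma_pos_of_pos (show (0:ℝ) < (1/2:ℝ) by norm_num)
  have h3 := Real.Gamma_pos_of_pos (show (0:ℝ) < ((n:ℝ)+1)/2 by positivity)
  have hA : Tendsto (fun s : ℝ => Real.Gamma (2 - 2*s)) (nhds (1/2:ℝ))
      (nhds (Real.Gamma 1)) :=
    (gammaCont19 one_pos).tendsto.comp (Continuous.tendsto' (by fun_prop) _ _ (by norm_num))
  have hB : Tendsto (fun s : ℝ => Real.Gamma (1 - s)) (nhds (1/2:ℝ))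
      (nhds (Real.Gamma (1/2))) :=
    (gammaCont19 (by norm_num)).tendsto.comp (Continuous.tendsto' (by fun_prop) _ _ (by norm_num))
  have hC : Tendsto (fun s : ℝ => Real.Gamma (((n:ℝ) + 2 - 2*s)/2)) (nhds (1/2:ℝ))
      (nhds (Real.Gamma (((n:ℝ)+1)/2))) :=
    (gammaCont19 (by positivity)).tendsto.comp
      (Continuous.tendsto' (by fun_prop) _ _ (by norm_num; ring))
  have hden : (1/2:ℝ) * Real.Gamma ((n : ℝ) / 2 + 1) * Real.Gamma (1/2) *
      Real.Gamma (((n : ℝ) + 1) / 2) ≠ 0 := by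
    exact (mul_pos (mul_pos (mul_pos (by norm_num) h1) h2) h3).ne'
  have hg : Tendsto g (nhds (1/2:ℝ)) (nhds V) := by
    rw [hgdef, hVdef]
    exact (hA.mul tendsto_const_nhds).div
      (((tendsto_id.mul tendsto_const_nhds).mul hB).mul hC) hden
  have hval : V = 2 * π ^ ((n - 1 : ℝ) / 2) / Real.Gamma (((n : ℝ) + 1) / 2) *
        (2 * π ^ ((n : ℝ) / 2) / Real.Gamma ((n : ℝ) / 2)) := by
    rw [hVdef, Real.Gamma_one, Real.Gamma_one_half_eq,
      Real.Gamma_add_one (show ((n:ℝ)/2) ≠ 0 by positivity)]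
    have hG1 : Real.Gamma ((n:ℝ)/2) ≠ 0 := (Real.Gamma_pos_of_pos (by positivity)).ne'
    have hG2 : Real.Gamma (((n:ℝ)+1)/2) ≠ 0 := h3.ne'
    have hpow : (π : ℝ) ^ n = Real.sqrt π * (π ^ ((n - 1 : ℝ) / 2) * π ^ ((n : ℝ) / 2)) := by
      rw [Real.sqrt_eq_rpow, ← Real.rpow_add hπ, ← Real.rpow_add hπ, ← Real.rpow_natCast π n]
      ring_nf
    rw [hpow]
    have hs : Real.sqrt π ≠ 0 := by positivity
    field_simp
  have hev : (fun s : ℝ => (1 - 2*s) * P s) =ᶠ[nhdsWithin (1/2 : ℝ) (Iio (1/2))] g := by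
    have h0 : ∀ᶠ s in nhdsWithin (1/2 : ℝ) (Iio (1/2)), (0:ℝ) < s :=
      eventually_nhdsWithin_of_eventually_nhds
        (Filter.Tendsto.eventually_const_lt (by norm_num) tendsto_id)
    filter_upwards [h0, self_mem_nhdsWithin] with s hs0 hs1
    have hs2 : s ∈ Ioo (0:ℝ) (1/2) := ⟨hs0, hs1⟩
    rw [hPformula s hs2]
    simp only [hgdef]
    have h12 : (1:ℝ) - 2*s ≠ 0 := by
      have := hs2.2; intro h; nlinarith
    have hG : Real.Gamma (2 - 2*s) = (1 - 2*s) * Real.Gamma (1 - 2*s) := by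
      have := Real.Gamma_add_one h12
      rw [show (1:ℝ) - 2*s + 1 = 2 - 2*s by ring] at this
      exact this
    rw [hG]
    ring
  exact Tendsto.congr' hev.symm (hval ▸ hg.mono_left nhdsWithin_le_nhds)
end
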